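/- Let H_A, H_B be finite-dimensional Hilbert spaces with dimensions d_A, d_B, let ρ be a separable state on ℂ^k ⊗ ℂ^k, and let φ_k = (1/√k) ∑_{i=1}^k e_i ⊗ e_i be a maximally entangled state vector. Then ⟨φ_k, ρ φ_k⟩ ≤ 1/k. -/

import Mathlib

open scoped ComplexOrder

/-- A density operator: positive semidefinite with trace one. -/
def IsState {γ : Type*} [Fintype γ] [DecidableEq γ] (ρ : Matrix γ γ ℂ) : Prop :=
  ρ.PosSemidef ∧ ρ.trace = 1

/-- The product (Kronecker) operator `σ ⊗ τ` on a bipartite system. -/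
def prodOp {α β : Type*} (σ : Matrix α α ℂ) (τ : Matrix β β ℂ) :
    Matrix (α × β) (α × β) ℂ :=
  Matrix.of fun p q => σ p.1 q.1 * τ p.2 q.2

/-- A bipartite state is separable if it lies in the convex hull of the product states. -/
def SepState {α β : Type*} [Fintype α] [DecidableEq α] [Fintype β] [DecidableEq β]
    (ρ : Matrix (α × β) (α × β) ℂ) : Prop :=
  ρ ∈ convexHull ℝ
    {M : Matrix (α × β) (α × β) ℂ | ∃ σ τ, IsState σ ∧ IsState τ ∧ M = prodOp σ τ}

/-- The maximally entangled state vector `φ_k = (1/√k) ∑ᵢ eᵢ ⊗ eᵢ` on `ℂᵏ ⊗ ℂᵏ`. -/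
noncomputable def maxEntVec (k : ℕ) : Fin k × Fin k → ℂ :=
  fun p => if p.1 = p.2 then ((1 / Real.sqrt k : ℝ) : ℂ) else 0

open scoped Matrix
lemma psd_entry_bound {n : Type*} [Fintype n] [DecidableEq n] {A : Matrix n n ℂ}
    (hA : A.PosSemidef) (i j : n) :
    ‖A i j‖ ≤ Real.sqrt (A i i).re * Real.sqrt (A j j).re := by
  obtain ⟨B, rfl⟩ : ∃ B : Matrix n n ℂ, A = Bᴴ * B := by
    open scoped MatrixOrder in
    exact CStarAlgebra.nonneg_iff_eq_star_mul_self.mp hA.nonneg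
  set x : EuclideanSpace ℂ n := WithLp.toLp 2 (fun m => B m i) with hx
  set y : EuclideanSpace ℂ n := WithLp.toLp 2 (fun m => B m j) with hy
  have hxy : (Bᴴ * B) i j = (inner ℂ x y : ℂ) := by
    simp [Matrix.mul_apply, Matrix.conjTranspose_apply, PiLp.inner_apply, RCLike.inner_apply,
      hx, hy, mul_comm]
  have hxx : (Bᴴ * B) i i = (inner ℂ x x : ℂ) := by
    simp [Matrix.mul_apply, Matrix.conjTranspose_apply, PiLp.inner_apply, RCLike.inner_apply, hx, -inner_self_eq_norm_sq_to_K, mul_comm]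
  have hyy : (Bᴴ * B) j j = (inner ℂ y y : ℂ) := by
    simp [Matrix.mul_apply, Matrix.conjTranspose_apply, PiLp.inner_apply, RCLike.inner_apply, hy, -inner_self_eq_norm_sq_to_K, mul_comm]
  have := norm_inner_le_norm (𝕜 := ℂ) x y
  rw [hxy, hxx, hyy]
  calc ‖(inner ℂ x y : ℂ)‖ ≤ ‖x‖ * ‖y‖ := norm_inner_le_norm x y
    _ = Real.sqrt ((inner ℂ x x : ℂ)).re * Real.sqrt ((inner ℂ y y : ℂ)).re := by
        rw [@norm_eq_sqrt_re_inner ℂ, @norm_eq_sqrt_re_inner ℂ]; rfl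

lemma psd_diag_nonneg {n : Type*} [Fintype n] [DecidableEq n] {A : Matrix n n ℂ}
    (hA : A.PosSemidef) (i : n) : 0 ≤ (A i i).re := by
  have h := hA.dotProduct_mulVec_nonneg (Pi.single i 1)
  have he : star (Pi.single i 1) ⬝ᵥ A.mulVec (Pi.single i 1) = A i i := by
    simp [Matrix.mulVec_single, dotProduct, Pi.single_apply, apply_ite, Finset.sum_ite_eq]
  rw [he] at h
  exact (Complex.le_def.mp h).1

/-- For states σ, τ, the real part of `∑ i j, σ i j * τ i j` is at most 1. -/
lemma sum_prod_entries_le {n : Type*} [Fintype n] [DecidableEq n] {σ τ : Matrix n n ℂ}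
    (hσ : σ.PosSemidef) (hσt : σ.trace = 1) (hτ : τ.PosSemidef) (hτt : τ.trace = 1) :
    (∑ i, ∑ j, σ i j * τ i j).re ≤ 1 := by
  set a : n → ℝ := fun i => Real.sqrt (σ i i).re * Real.sqrt (τ i i).re with ha
  have key : ∀ i j, (σ i j * τ i j).re ≤ a i * a j := by
    intro i j
    calc (σ i j * τ i j).re ≤ ‖σ i j * τ i j‖ := Complex.re_le_norm _
      _ = ‖σ i j‖ * ‖τ i j‖ := norm_mul _ _
      _ ≤ (Real.sqrt (σ i i).re * Real.sqrt (σ j j).re) *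
          (Real.sqrt (τ i i).re * Real.sqrt (τ j j).re) := by
            exact mul_le_mul (psd_entry_bound hσ i j) (psd_entry_bound hτ i j)
              (norm_nonneg _) (by positivity)
      _ = a i * a j := by rw [ha]; ring
  have hsum : (∑ i, ∑ j, σ i j * τ i j).re = ∑ i, ∑ j, (σ i j * τ i j).re := by
    simp [Complex.re_sum]
  rw [hsum]
  have h1 : ∑ i, ∑ j, (σ i j * τ i j).re ≤ (∑ i, a i) * (∑ j, a j) := by
    rw [Finset.sum_mul_sum]
    exact Finset.sum_le_sum fun i _ => Finset.sum_le_sum fun j _ => key i j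
  have ha_le : ∑ i, a i ≤ 1 := by
    have hst : ∑ i, (σ i i).re = 1 := by
      have := congrArg Complex.re hσt
      simpa [Matrix.trace, Matrix.diag, Complex.re_sum] using this
    have htt : ∑ i, (τ i i).re = 1 := by
      have := congrArg Complex.re hτt
      simpa [Matrix.trace, Matrix.diag, Complex.re_sum] using this
    have : ∑ i, a i ≤ ∑ i, ((σ i i).re + (τ i i).re) / 2 := by
      refine Finset.sum_le_sum fun i _ => ?_
      rw [ha]
      nlinarith [Real.sq_sqrt (psd_diag_nonneg hσ i), Real.sq_sqrt (psd_diag_nonneg hτ i),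
        sq_nonneg (Real.sqrt (σ i i).re - Real.sqrt (τ i i).re),
        Real.sqrt_nonneg (σ i i).re, Real.sqrt_nonneg (τ i i).re]
    calc ∑ i, a i ≤ ∑ i, ((σ i i).re + (τ i i).re) / 2 := this
      _ = 1 := by rw [← Finset.sum_div, Finset.sum_add_distrib, hst, htt]; norm_num
  have ha_nn : 0 ≤ ∑ i, a i :=
    Finset.sum_nonneg fun i _ => by positivity
  calc ∑ i, ∑ j, (σ i j * τ i j).re ≤ (∑ i, a i) * (∑ j, a j) := h1
    _ ≤ 1 * 1 := mul_le_mul ha_le ha_le ha_nn zero_le_one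
    _ = 1 := one_mul 1

/-- for any separable state `ρ` on `ℂᵏ ⊗ ℂᵏ` and the maximally entangled
vector `φ_k`, one has `⟨φ_k, ρ φ_k⟩ ≤ 1/k`. -/
theorem stmt_9 (k : ℕ) (hk : 0 < k) (ρ : Matrix (Fin k × Fin k) (Fin k × Fin k) ℂ)
    (hρ : IsState ρ) (hsep : SepState ρ) :
    (∑ p, ∑ q, (starRingEnd ℂ) (maxEntVec k p) * ρ p q * maxEntVec k q).re ≤
      1 / (k : ℝ) := by
  set f : Matrix (Fin k × Fin k) (Fin k × Fin k) ℂ → ℝ :=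
    fun M => (∑ p, ∑ q, (starRingEnd ℂ) (maxEntVec k p) * M p q * maxEntVec k q).re with hf
  have hlin : IsLinearMap ℝ f := by
    constructor
    · intro M N
      simp [hf, Matrix.add_apply, mul_add, add_mul, Finset.sum_add_distrib]
      ring
    · intro c M
      have h : ∀ p q : Fin k × Fin k,
          (starRingEnd ℂ) (maxEntVec k p) * ((c : ℂ) * M p q) * maxEntVec k q
            = (c : ℂ) * ((starRingEnd ℂ) (maxEntVec k p) * M p q * maxEntVec k q) :=
        fun p q => by ring
      simp only [hf, Matrix.smul_apply, Complex.real_smul, h, ← Finset.mul_sum,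
        Complex.re_ofReal_mul, smul_eq_mul]
  have hprod : ∀ M ∈ {M : Matrix (Fin k × Fin k) (Fin k × Fin k) ℂ |
      ∃ σ τ, IsState σ ∧ IsState τ ∧ M = prodOp σ τ}, f M ≤ 1 / (k : ℝ) := by
    rintro M ⟨σ, τ, hσ, hτ, rfl⟩
    have hc : ((1 / Real.sqrt k : ℝ) : ℂ) * ((1 / Real.sqrt k : ℝ) : ℂ)
        = ((1 / (k : ℝ) : ℝ) : ℂ) := by
      rw [← Complex.ofReal_mul]
      congr 1
      rw [div_mul_div_comm, one_mul, Real.mul_self_sqrt (Nat.cast_nonneg k)]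
    have hval : f (prodOp σ τ) = (1 / (k : ℝ)) * (∑ i, ∑ j, σ i j * τ i j).re := by
      simp only [hf]
      rw [← Complex.re_ofReal_mul, ← hc]
      congr 1
      simp only [Fintype.sum_prod_type, maxEntVec, prodOp, Matrix.of_apply,
        apply_ite (starRingEnd ℂ), map_zero, Complex.conj_ofReal, ite_mul, zero_mul,
        mul_ite, mul_zero, Finset.sum_ite_irrel, Finset.sum_const_zero, Finset.sum_ite_eq,
        Finset.sum_ite_eq', Finset.mem_univ, if_true]
      rw [Finset.mul_sum]
      refine Finset.sum_congr rfl fun i _ => ?_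
      rw [Finset.mul_sum]
      refine Finset.sum_congr rfl fun j _ => ?_
      ring
    rw [hval]
    have h1 : (∑ i, ∑ j, σ i j * τ i j).re ≤ 1 :=
      sum_prod_entries_le hσ.1 hσ.2 hτ.1 hτ.2
    have hk' : (0 : ℝ) < 1 / (k : ℝ) := by positivity
    nlinarith
  have hconv : Convex ℝ {M : Matrix (Fin k × Fin k) (Fin k × Fin k) ℂ | f M ≤ 1 / (k : ℝ)} :=
    convex_halfSpace_le hlin _
  have := convexHull_min hprod hconv hsep
  exact this
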